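/- Smooth diagonalization of the BDF3 companion matrix near s = 1/11: let M(s) be the 3×3 matrix with rows (18s, −9s, 2s), (1, 0, 0), (0, 1, 0), regarded as a complex matrix. There exist absolute constants κ₀ > 0, B₁ > 0, B₂ > 0 such that for every κ with 0 < κ ≤ κ₀, setting s = (1 − κ)/11, there exist an invertible complex 3×3 matrix N and a diagonal complex 3×3 matrix Λ = diag(λ₁, λ₂, λ₃) with M(s) = N⁻¹ Λ N, max{|λ₁|, |λ₂|, |λ₃|} ≤ 1 − B₁ κ, and the operator norms of N and N⁻¹ (with respect to the Euclidean norm on ℂ³) both at most B₂. -/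

import Mathlib

set_option maxHeartbeats 1000000


noncomputable section

/-- The BDF3 companion matrix with rows `(18s, -9s, 2s)`, `(1,0,0)`, `(0,1,0)`,
regarded as a complex matrix. -/
def Mc (s : ℝ) : Matrix (Fin 3) (Fin 3) ℂ :=
  !![(18 * s : ℂ), (-9 * s : ℂ), (2 * s : ℂ); 1, 0, 0; 0, 1, 0]

/-- The Euclidean norm on `ℂ³`. -/
def cnorm3 (v : Fin 3 → ℂ) : ℝ := Real.sqrt (∑ i, ‖v i‖ ^ 2)

lemma quad_root (p q t : ℝ) (ht2 : t^2 = 4*q - p^2) :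
    ((-p/2 : ℝ) : ℂ)^2 + (p:ℂ)*((-p/2 : ℝ):ℂ) + (q:ℂ)
      = -(((t/2 : ℝ):ℂ)*Complex.I)^2 := by
  have ht2C : ((t:ℂ))^2 = 4*(q:ℂ) - (p:ℂ)^2 := by exact_mod_cast ht2
  push_cast
  linear_combination (-(1:ℂ)/4) * ht2C + ((t:ℂ)^2/4) * Complex.I_sq

lemma eig_of_quad (s l p q : ℝ) (hrootS : 18*s*l^2 - 9*s*l + 2*s = l^3)
    (hp : p = l - 18*s) (hlq : l*q = 2*s) (hl0 : l ≠ 0) (L : ℂ)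
    (hquad : L^2 + (p:ℂ)*L + (q:ℂ) = 0) :
    18*(s:ℂ)*L^2 - 9*(s:ℂ)*L + 2*(s:ℂ) = L^3 := by
  have hpC : (p:ℂ) = (l:ℂ) - 18*(s:ℂ) := by rw [hp]; push_cast; ring
  have hlqC : (l:ℂ) * (q:ℂ) = 2*(s:ℂ) := by exact_mod_cast hlq
  have hrC : 18*(s:ℂ)*(l:ℂ)^2 - 9*(s:ℂ)*(l:ℂ) + 2*(s:ℂ) = (l:ℂ)^3 := by exact_mod_cast hrootS
  -- q - l*p = 9*s over ℂ, derived multiplied by l:  l*q - l^2*p = 9*s*l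
  have hc2 : (l:ℂ)*((q:ℂ) - (l:ℂ)*(p:ℂ)) = (l:ℂ)*(9*(s:ℂ)) := by
    linear_combination hlqC - (l:ℂ)^2 * hpC + hrC
  have hl0C : (l:ℂ) ≠ 0 := by exact_mod_cast hl0
  have hc2' : (q:ℂ) - (l:ℂ)*(p:ℂ) = 9*(s:ℂ) := mul_left_cancel₀ hl0C hc2
  linear_combination (-(L - (l:ℂ))) * hquad + L^2 * hpC + L * hc2' - hlqC

lemma Mc_mul_V (s : ℝ) (L1 L2 L3 : ℂ)
    (h1 : 18*(s:ℂ)*L1^2 - 9*(s:ℂ)*L1 + 2*(s:ℂ) = L1^3)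
    (h2 : 18*(s:ℂ)*L2^2 - 9*(s:ℂ)*L2 + 2*(s:ℂ) = L2^3)
    (h3 : 18*(s:ℂ)*L3^2 - 9*(s:ℂ)*L3 + 2*(s:ℂ) = L3^3) :
    Mc s * !![L1^2, L2^2, L3^2; L1, L2, L3; (1:ℂ), 1, 1]
      = !![L1^2, L2^2, L3^2; L1, L2, L3; (1:ℂ), 1, 1] * !![L1,0,0;0,L2,0;0,0,L3] := by
  rw [Mc, Matrix.mul_fin_three, Matrix.mul_fin_three]
  ext i j
  fin_cases i <;> fin_cases j <;> simp <;>
    first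
      | linear_combination h1
      | linear_combination h2
      | linear_combination h3
      | ring

lemma abs_sub_le2 (a b : ℂ) (ha : ‖a‖ ≤ 1) (hb : ‖b‖ ≤ 1) :
    ‖(a - b)‖ ≤ 2 := by
  rw [sub_eq_add_neg]
  calc ‖(a + -b)‖ ≤ ‖a‖ + ‖(-b)‖ := norm_add_le a (-b)
    _ ≤ 2 := by rw [norm_neg]; linarith

lemma mulVec_bound (A : Matrix (Fin 3) (Fin 3) ℂ) (C : ℝ) (hC : 0 ≤ C)
    (h : ∀ i j, ‖(A i j)‖ ≤ C) (x : Fin 3 → ℂ) (hx : cnorm3 x = 1) :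
    cnorm3 (A.mulVec x) ≤ 3 * C := by
  have hx1 : ‖(x 0)‖ ^ 2 + ‖(x 1)‖ ^ 2 + ‖(x 2)‖ ^ 2 = 1 := by
    have := hx
    rw [cnorm3, Real.sqrt_eq_one, Fin.sum_univ_three] at this
    linarith
  have hsum : (‖(x 0)‖ + ‖(x 1)‖ + ‖(x 2)‖)^2 ≤ 3 := by
    nlinarith [sq_nonneg (‖(x 0)‖ - ‖(x 1)‖),
      sq_nonneg (‖(x 0)‖ - ‖(x 2)‖),
      sq_nonneg (‖(x 1)‖ - ‖(x 2)‖)]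
  have hrow : ∀ i, ‖(A.mulVec x i)‖ ≤ C * (‖(x 0)‖ + ‖(x 1)‖ + ‖(x 2)‖) := by
    intro i
    have he : A.mulVec x i = A i 0 * x 0 + A i 1 * x 1 + A i 2 * x 2 := by
      simp [Matrix.mulVec, dotProduct, Fin.sum_univ_three]
    rw [he]
    have t1 : ‖(A i 0 * x 0 + A i 1 * x 1 + A i 2 * x 2)‖
        ≤ ‖(A i 0 * x 0)‖ + ‖(A i 1 * x 1)‖ + ‖(A i 2 * x 2)‖ := by
      refine le_trans (norm_add_le _ _) ?_
      have := norm_add_le (A i 0 * x 0) (A i 1 * x 1)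
      linarith
    simp only [norm_mul] at t1
    nlinarith [h i 0, h i 1, h i 2, norm_nonneg (x 0),
      norm_nonneg (x 1), norm_nonneg (x 2)]
  rw [show cnorm3 (A.mulVec x) = Real.sqrt (∑ i, ‖(A.mulVec x i)‖ ^ 2) from rfl,
    Fin.sum_univ_three]
  rw [show (3 : ℝ) * C = Real.sqrt ((3*C)^2) by rw [Real.sqrt_sq (by linarith)]]
  apply Real.sqrt_le_sqrt
  nlinarith [hrow 0, hrow 1, hrow 2, hsum, norm_nonneg (A.mulVec x 0),
    norm_nonneg (A.mulVec x 1), norm_nonneg (A.mulVec x 2),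
    mul_nonneg hC (by positivity : (0:ℝ) ≤ ‖(x 0)‖ + ‖(x 1)‖ + ‖(x 2)‖),
    sq_nonneg C]

lemma sq_small (x : ℝ) (h0 : 0 ≤ x) (h : x^2 ≤ 19/100) : x ≤ 1/2 := by nlinarith


lemma cube_lb (t : ℝ) (h : 1/2 ≤ t) : (1/32 : ℝ) ≤ (t/2)*t*(t/2) := by nlinarith

lemma Ventry_bound (L1 L2 L3 : ℂ) (n1 : ‖L1‖ ≤ 1) (n2 : ‖L2‖ ≤ 1)
    (n3 : ‖L3‖ ≤ 1) :
    ∀ i j, ‖((!![L1^2, L2^2, L3^2; L1, L2, L3; (1:ℂ), 1, 1]) i j)‖ ≤ 1 := by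
  intro i j
  fin_cases i <;> fin_cases j <;> simp [norm_pow] <;>
    nlinarith [norm_nonneg L1, norm_nonneg L2,
      norm_nonneg L3]

lemma adj_bound (L1 L2 L3 : ℂ) (n1 : ‖L1‖ ≤ 1) (n2 : ‖L2‖ ≤ 1)
    (n3 : ‖L3‖ ≤ 1) :
    ∀ i j, ‖((!![L1^2, L2^2, L3^2; L1, L2, L3; (1:ℂ), 1, 1]).adjugate i j)‖ ≤ 2 := by
  intro i j
  rw [Matrix.adjugate_fin_three_of]
  fin_cases i <;> fin_cases j <;> simp [neg_add_eq_sub] <;>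
    apply abs_sub_le2 <;>
    (try simp only [norm_mul, norm_pow, norm_one]) <;>
    nlinarith [norm_nonneg L1, norm_nonneg L2,
      norm_nonneg L3]


/-- smooth diagonalization of the BDF3 companion matrix near
`s = 1/11`. There exist absolute constants `κ₀, B₁, B₂ > 0` such that for
`0 < κ ≤ κ₀` and `s = (1 - κ)/11`, `M(s) = N⁻¹ Λ N` with `Λ` diagonal,
all eigenvalues of modulus `≤ 1 - B₁ κ`, and the operator norms of `N` and
`N⁻¹` (w.r.t. the Euclidean norm on `ℂ³`) both at most `B₂`. -/
theorem companion_smooth_diagonalization :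
    ∃ κ₀ > (0 : ℝ), ∃ B₁ > (0 : ℝ), ∃ B₂ > (0 : ℝ),
      ∀ κ : ℝ, 0 < κ → κ ≤ κ₀ →
        ∃ (N : Matrix (Fin 3) (Fin 3) ℂ) (lam : Fin 3 → ℂ),
          IsUnit N ∧
          Mc ((1 - κ) / 11) = N⁻¹ * Matrix.diagonal lam * N ∧
          (∀ i, ‖(lam i)‖ ≤ 1 - B₁ * κ) ∧
          (∀ x : Fin 3 → ℂ, cnorm3 x = 1 → cnorm3 (N.mulVec x) ≤ B₂) ∧
          (∀ x : Fin 3 → ℂ, cnorm3 x = 1 → cnorm3 (N⁻¹.mulVec x) ≤ B₂) := by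
  refine ⟨1/100, by norm_num, 1, by norm_num, 200, by norm_num, ?_⟩
  intro κ hκ hκ'
  obtain ⟨s, hs⟩ : ∃ s : ℝ, s = (1 - κ)/11 := ⟨_, rfl⟩
  rw [← hs]
  -- real root l of the cubic in [1-2κ, 1-κ]
  have hab : (1 - 2*κ : ℝ) ≤ 1 - κ := by linarith
  have hcont : ContinuousOn (fun l : ℝ => 11*l^3 - (1-κ)*(18*l^2 - 9*l + 2))
      (Set.Icc (1-2*κ) (1-κ)) := by fun_prop
  have hmem : (0:ℝ) ∈ Set.Icc ((fun l : ℝ => 11*l^3 - (1-κ)*(18*l^2 - 9*l + 2)) (1-2*κ))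
      ((fun l : ℝ => 11*l^3 - (1-κ)*(18*l^2 - 9*l + 2)) (1-κ)) := by
    constructor
    · simp only
      nlinarith [sq_nonneg κ, hκ.le]
    · simp only
      nlinarith [sq_nonneg κ, hκ.le]
  obtain ⟨l, hlmem, hgl⟩ := intermediate_value_Icc hab hcont hmem
  simp only at hgl
  obtain ⟨hl_lb, hl_ub⟩ := hlmem
  have hl98 : (98/100 : ℝ) ≤ l := by linarith
  have hl1 : l ≤ 1 := by linarith
  have hlpos : 0 < l := by linarith
  have hs_lb : (9/100 : ℝ) ≤ s := by rw [hs]; linarith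
  have hs_ub : s ≤ 1/11 := by rw [hs]; linarith
  have hrootS : 18*s*l^2 - 9*s*l + 2*s = l^3 := by
    rw [hs]; linear_combination (-1/11 : ℝ) * hgl
  -- quadratic factor data
  obtain ⟨q, hlq⟩ : ∃ q : ℝ, l * q = 2*s := ⟨2*s/l, by field_simp⟩
  obtain ⟨p, hp⟩ : ∃ p : ℝ, p = l - 18*s := ⟨_, rfl⟩
  have hqpos : 0 < q := by nlinarith
  have hq_lb : (18/100 : ℝ) ≤ q := by nlinarith
  have hq_ub : q ≤ (19/100 : ℝ) := by nlinarith
  have hp_ub : p ≤ -(62/100 : ℝ) := by rw [hp]; nlinarith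
  have hp_lb : -(66/100 : ℝ) ≤ p := by rw [hp]; nlinarith
  have hdisc : (28/100 : ℝ) ≤ 4*q - p^2 := by nlinarith
  obtain ⟨t, ht⟩ : ∃ t : ℝ, t = Real.sqrt (4*q - p^2) := ⟨_, rfl⟩
  have ht2 : t^2 = 4*q - p^2 := by rw [ht]; exact Real.sq_sqrt (by linarith)
  have htnn : 0 ≤ t := ht ▸ Real.sqrt_nonneg _
  have htpos : 0 < t := by nlinarith
  have ht_lb : (1/2 : ℝ) ≤ t := by nlinarith
  have ht_ub : t ≤ 1 := by nlinarith
  have hcube : (1/32 : ℝ) ≤ (t/2)*t*(t/2) := cube_lb t ht_lb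
  -- the three eigenvalues
  obtain ⟨L1, hL1⟩ : ∃ L : ℂ, L = (l : ℂ) := ⟨_, rfl⟩
  obtain ⟨L2, hL2⟩ : ∃ L : ℂ, L = ((-p/2 : ℝ) : ℂ) + ((t/2 : ℝ) : ℂ) * Complex.I := ⟨_, rfl⟩
  obtain ⟨L3, hL3⟩ : ∃ L : ℂ, L = ((-p/2 : ℝ) : ℂ) - ((t/2 : ℝ) : ℂ) * Complex.I := ⟨_, rfl⟩
  have hI2 : (Complex.I)^2 = -1 := Complex.I_sq
  have ht2C : ((t:ℂ))^2 = 4*(q:ℂ) - (p:ℂ)^2 := by exact_mod_cast ht2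
  have hquad2 : L2^2 + (p:ℂ)*L2 + (q:ℂ) = 0 := by
    rw [hL2]; push_cast
    linear_combination (-(1:ℂ)/4) * ht2C + ((t:ℂ)^2/4) * hI2
  have hquad3 : L3^2 + (p:ℂ)*L3 + (q:ℂ) = 0 := by
    rw [hL3]; push_cast
    linear_combination (-(1:ℂ)/4) * ht2C + ((t:ℂ)^2/4) * hI2
  have hr1 : 18*(s:ℂ)*L1^2 - 9*(s:ℂ)*L1 + 2*(s:ℂ) = L1^3 := by
    rw [hL1]; exact_mod_cast hrootS
  have hr2 := eig_of_quad s l p q hrootS hp hlq (ne_of_gt hlpos) L2 hquad2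
  have hr3 := eig_of_quad s l p q hrootS hp hlq (ne_of_gt hlpos) L3 hquad3
  -- modulus facts
  have habsL1 : ‖L1‖ = l := by
    rw [hL1, Complex.norm_real, Real.norm_eq_abs, abs_of_pos hlpos]
  have hre2 : L2.re = -p/2 := by rw [hL2]; simp
  have him2 : L2.im = t/2 := by rw [hL2]; simp
  have hre3 : L3.re = -p/2 := by rw [hL3]; simp
  have him3 : L3.im = -(t/2) := by rw [hL3]; simp
  have habsL2sq : (‖L2‖)^2 = q := by
    rw [Complex.sq_norm, Complex.normSq_apply, hre2, him2]
    linear_combination (1/4 : ℝ) * ht2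
  have habsL3sq : (‖L3‖)^2 = q := by
    rw [Complex.sq_norm, Complex.normSq_apply, hre3, him3]
    linear_combination (1/4 : ℝ) * ht2
  have habsL2 : ‖L2‖ ≤ 1/2 :=
    sq_small _ (norm_nonneg L2) (by rw [habsL2sq]; linarith)
  have habsL3 : ‖L3‖ ≤ 1/2 :=
    sq_small _ (norm_nonneg L3) (by rw [habsL3sq]; linarith)
  -- eigenvalue separation
  have habs12 : t/2 ≤ ‖(L1 - L2)‖ := by
    have him : (L1 - L2).im = -(t/2) := by rw [Complex.sub_im, him2, hL1]; simp
    calc t/2 = |(L1 - L2).im| := by rw [him, abs_neg, abs_of_pos (by linarith)]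
      _ ≤ ‖(L1 - L2)‖ := Complex.abs_im_le_norm _
  have habs13 : t/2 ≤ ‖(L1 - L3)‖ := by
    have him : (L1 - L3).im = t/2 := by rw [Complex.sub_im, him3, hL1]; simp
    calc t/2 = |(L1 - L3).im| := by rw [him, abs_of_pos (by linarith)]
      _ ≤ ‖(L1 - L3)‖ := Complex.abs_im_le_norm _
  have habs23 : ‖(L2 - L3)‖ = t := by
    have : L2 - L3 = ((t:ℝ):ℂ) * Complex.I := by rw [hL2, hL3]; push_cast; ring
    rw [this, norm_mul, Complex.norm_I, Complex.norm_real, Real.norm_eq_abs, abs_of_pos htpos, mul_one]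
  have n1 : ‖L1‖ ≤ 1 := by rw [habsL1]; linarith
  have n2 : ‖L2‖ ≤ 1 := le_trans habsL2 (by norm_num)
  have n3 : ‖L3‖ ≤ 1 := le_trans habsL3 (by norm_num)
  -- the eigenvector matrix
  obtain ⟨V, hV⟩ : ∃ V, V = !![L1^2, L2^2, L3^2; L1, L2, L3; (1:ℂ), 1, 1] := ⟨_, rfl⟩
  have hdetV : V.det = (L1 - L2) * (L2 - L3) * (L1 - L3) := by
    rw [hV, Matrix.det_fin_three]
    simp
    ring
  have hdet_lb : (1/32 : ℝ) ≤ ‖V.det‖ := by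
    rw [hdetV, norm_mul, norm_mul]
    have hstep : (t/2) * t * (t/2) ≤
        ‖(L1 - L2)‖ * ‖(L2 - L3)‖ * ‖(L1 - L3)‖ := by
      rw [habs23]; gcongr
    linarith [hcube]
  have hdet_pos : 0 < ‖V.det‖ := lt_of_lt_of_le (by norm_num) hdet_lb
  have hdet_ne : V.det ≠ 0 := by
    intro h; rw [h] at hdet_pos; simp at hdet_pos
  have hVdu : IsUnit V.det := isUnit_iff_ne_zero.mpr hdet_ne
  have hNinvV : (V⁻¹)⁻¹ = V := Matrix.nonsing_inv_nonsing_inv V hVdu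
  refine ⟨V⁻¹, ![L1, L2, L3], ?_, ?_, ?_, ?_, ?_⟩
  · rw [Matrix.isUnit_iff_isUnit_det, Matrix.det_nonsing_inv, Ring.inverse_eq_inv']
    exact isUnit_iff_ne_zero.mpr (inv_ne_zero hdet_ne)
  · rw [hNinvV]
    have hD : Matrix.diagonal ![L1,L2,L3] = !![L1,0,0;0,L2,0;0,0,L3] := by
      ext i j; fin_cases i <;> fin_cases j <;> simp [Matrix.diagonal_apply, Matrix.vecHead, Matrix.vecTail]
    rw [hD]
    have hMV := Mc_mul_V s L1 L2 L3 hr1 hr2 hr3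
    rw [← hV] at hMV
    calc Mc s = Mc s * (V * V⁻¹) := by rw [Matrix.mul_nonsing_inv V hVdu, mul_one]
      _ = (Mc s * V) * V⁻¹ := by rw [Matrix.mul_assoc]
      _ = (V * !![L1,0,0;0,L2,0;0,0,L3]) * V⁻¹ := by rw [hMV]
      _ = V * !![L1,0,0;0,L2,0;0,0,L3] * V⁻¹ := by rw [Matrix.mul_assoc]
  · intro i
    fin_cases i
    · show ‖L1‖ ≤ 1 - 1*κ
      rw [habsL1]; linarith
    · show ‖L2‖ ≤ 1 - 1*κ
      linarith
    · show ‖L3‖ ≤ 1 - 1*κ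
      linarith
  · have hadj : ∀ i j, ‖(V.adjugate i j)‖ ≤ 2 := by
      rw [hV]; exact adj_bound L1 L2 L3 n1 n2 n3
    have hNentry : ∀ i j, ‖(V⁻¹ i j)‖ ≤ 64 := by
      intro i j
      have hinv : V⁻¹ = (V.det)⁻¹ • V.adjugate := by rw [Matrix.inv_def, Ring.inverse_eq_inv']
      rw [hinv, Matrix.smul_apply, smul_eq_mul, norm_mul, norm_inv]
      have h1 : (‖V.det‖)⁻¹ ≤ 32 := by
        rw [show (32:ℝ) = ((1:ℝ)/32)⁻¹ by norm_num]
        exact inv_anti₀ (by norm_num) hdet_lb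
      exact le_trans (mul_le_mul h1 (hadj i j)
        (norm_nonneg _) (by norm_num)) (by norm_num)
    intro x hx
    exact le_trans (mulVec_bound _ 64 (by norm_num) hNentry x hx) (by norm_num)
  · rw [hNinvV]
    have hVentry : ∀ i j, ‖(V i j)‖ ≤ 1 := by
      rw [hV]; exact Ventry_bound L1 L2 L3 n1 n2 n3
    intro x hx
    exact le_trans (mulVec_bound _ 1 (by norm_num) hVentry x hx) (by norm_num)
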